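/- Let l, l' be natural numbers, n = l + l', B an abelian group, and y : Fin l → B, y' : Fin l' → B such that the 2l + l' elements y_1, …, y_l, −y_1, …, −y_l, y'_1, …, y'_{l'} are pairwise distinct. Define ρ : ℤ^n → B by ρ(a) = Σ_{i=1}^{l} a_i·y_i + Σ_{j=1}^{l'} a_{l+j}·y'_j and set R(Y) = ker ρ. Let C_1, C_2 be subgroups of ℤ^n with C_1 ≤ R(Y) and C_2 ≤ R(Y), let q_i : ℤ^n → ℤ^n/C_i be the quotient maps, and let π_i : ℤ^n/C_i → ℤ^n/R(Y) be the induced projections. Let E_1, …, E_n denote the standard basis vectors of ℤ^n. Suppose φ : ℤ^n/C_1 → ℤ^n/C_2 is a group isomorphism such that π_2 ∘ φ = π_1 and φ maps the set {q_1(E_1), …, q_1(E_l), −q_1(E_1), …, −q_1(E_l), q_1(E_{l+1}), …, q_1(E_{l+l'})} onto the set {q_2(E_1), …, q_2(E_l), −q_2(E_1), …, −q_2(E_l), q_2(E_{l+1}), …, q_2(E_{l+l'})}. Then C_1 = C_2. -/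

import Mathlib

theorem stmt2 {l l' : ℕ} {B : Type*} [AddCommGroup B]
    (y : Fin l → B) (y' : Fin l' → B)
    (hdist : Function.Injective
      (Sum.elim y (Sum.elim (fun i : Fin l => -y i) y') : Fin l ⊕ (Fin l ⊕ Fin l') → B))
    (ρ : (Fin (l + l') → ℤ) →+ B)
    (hρ : ∀ a, ρ a =
      (∑ i : Fin l, a (Fin.castAdd l' i) • y i) + ∑ j : Fin l', a (Fin.natAdd l j) • y' j)
    (RY : AddSubgroup (Fin (l + l') → ℤ)) (hRY : RY = ρ.ker)
    (C₁ C₂ : AddSubgroup (Fin (l + l') → ℤ)) (hC₁ : C₁ ≤ RY) (hC₂ : C₂ ≤ RY)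
    (φ : ((Fin (l + l') → ℤ) ⧸ C₁) ≃+ ((Fin (l + l') → ℤ) ⧸ C₂))
    (hπ : ∀ w, QuotientAddGroup.map C₂ RY (AddMonoidHom.id _) hC₂ (φ w) =
      QuotientAddGroup.map C₁ RY (AddMonoidHom.id _) hC₁ w)
    (hE : φ ''
        ((Set.range fun i : Fin l =>
            ((Pi.single (Fin.castAdd l' i) 1 : Fin (l + l') → ℤ) : (Fin (l + l') → ℤ) ⧸ C₁)) ∪
          (Set.range fun i : Fin l =>
            -((Pi.single (Fin.castAdd l' i) 1 : Fin (l + l') → ℤ) : (Fin (l + l') → ℤ) ⧸ C₁)) ∪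
          (Set.range fun j : Fin l' =>
            ((Pi.single (Fin.natAdd l j) 1 : Fin (l + l') → ℤ) : (Fin (l + l') → ℤ) ⧸ C₁))) =
        ((Set.range fun i : Fin l =>
            ((Pi.single (Fin.castAdd l' i) 1 : Fin (l + l') → ℤ) : (Fin (l + l') → ℤ) ⧸ C₂)) ∪
          (Set.range fun i : Fin l =>
            -((Pi.single (Fin.castAdd l' i) 1 : Fin (l + l') → ℤ) : (Fin (l + l') → ℤ) ⧸ C₂)) ∪
          (Set.range fun j : Fin l' =>
            ((Pi.single (Fin.natAdd l j) 1 : Fin (l + l') → ℤ) : (Fin (l + l') → ℤ) ⧸ C₂)))) :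
    C₁ = C₂ := by
  classical
  subst hRY
  -- values of ρ on standard basis vectors
  have hρcast : ∀ i : Fin l, ρ (Pi.single (Fin.castAdd l' i) 1) = y i := by
    intro i
    rw [hρ]
    have h1 : ∀ i' : Fin l, (Pi.single (Fin.castAdd l' i) 1 : Fin (l+l') → ℤ) (Fin.castAdd l' i') • y i'
        = if i' = i then y i' else 0 := by
      intro i'; simp [Pi.single_apply, Fin.ext_iff]
    have h2 : ∀ j : Fin l', (Pi.single (Fin.castAdd l' i) 1 : Fin (l+l') → ℤ) (Fin.natAdd l j) • y' j = 0 := by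
      intro j
      have : Fin.natAdd l j ≠ Fin.castAdd l' i := by simp [Fin.ext_iff]; omega
      simp [Pi.single_apply, this]
    simp only [h1, h2, Finset.sum_ite_eq', Finset.mem_univ, if_true, Finset.sum_const_zero,
      add_zero]
  have hρnat : ∀ j : Fin l', ρ (Pi.single (Fin.natAdd l j) 1) = y' j := by
    intro j
    rw [hρ]
    have h1 : ∀ i : Fin l, (Pi.single (Fin.natAdd l j) 1 : Fin (l+l') → ℤ) (Fin.castAdd l' i) • y i = 0 := by
      intro i
      have : Fin.castAdd l' i ≠ Fin.natAdd l j := by simp [Fin.ext_iff]; omega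
      simp [Pi.single_apply, this]
    have h2 : ∀ j' : Fin l', (Pi.single (Fin.natAdd l j) 1 : Fin (l+l') → ℤ) (Fin.natAdd l j') • y' j'
        = if j' = j then y' j' else 0 := by
      intro j'; simp [Pi.single_apply, Fin.ext_iff]
    simp only [h1, h2, Finset.sum_ite_eq', Finset.mem_univ, if_true, Finset.sum_const_zero,
      zero_add]
  -- equality mod ρ.ker implies equal ρ-values
  have hkq : ∀ u v : Fin (l+l') → ℤ,
      ((u : (Fin (l+l') → ℤ) ⧸ ρ.ker) = (v : (Fin (l+l') → ℤ) ⧸ ρ.ker)) → ρ u = ρ v := by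
    intro u v h
    rw [QuotientAddGroup.eq] at h
    have h0 : ρ (-u + v) = 0 := h
    rw [map_add, map_neg, neg_add_eq_zero] at h0
    exact h0
  -- the projection to the big quotient sends mk to mk
  have hmap : ∀ (C : AddSubgroup (Fin (l+l') → ℤ)) (hC : C ≤ ρ.ker) (x : Fin (l+l') → ℤ),
      QuotientAddGroup.map C ρ.ker (AddMonoidHom.id _) hC (x : (Fin (l+l') → ℤ) ⧸ C)
        = (x : (Fin (l+l') → ℤ) ⧸ ρ.ker) := by
    intro C hC x
    rfl
  -- distinctness facts
  have hd1 : ∀ i k : Fin l, y k = y i → k = i := by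
    intro i k h
    have := hdist (a₁ := Sum.inl k) (a₂ := Sum.inl i) (by simpa using h)
    simpa using this
  have hd2 : ∀ i k : Fin l, ¬ (-y k = y i) := by
    intro i k h
    have := hdist (a₁ := Sum.inr (Sum.inl k)) (a₂ := Sum.inl i) (by simpa using h)
    simp at this
  have hd3 : ∀ (i : Fin l) (j : Fin l'), ¬ (y' j = y i) := by
    intro i j h
    have := hdist (a₁ := Sum.inr (Sum.inr j)) (a₂ := Sum.inl i) (by simpa using h)
    simp at this
  have hd4 : ∀ (j : Fin l') (k : Fin l), ¬ (y k = y' j) := by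
    intro j k h
    have := hdist (a₁ := Sum.inl k) (a₂ := Sum.inr (Sum.inr j)) (by simpa using h)
    simp at this
  have hd5 : ∀ (j : Fin l') (k : Fin l), ¬ (-y k = y' j) := by
    intro j k h
    have := hdist (a₁ := Sum.inr (Sum.inl k)) (a₂ := Sum.inr (Sum.inr j)) (by simpa using h)
    simp at this
  have hd6 : ∀ j j' : Fin l', y' j' = y' j → j' = j := by
    intro j j' h
    have := hdist (a₁ := Sum.inr (Sum.inr j')) (a₂ := Sum.inr (Sum.inr j)) (by simpa using h)
    simpa using this
  -- φ sends basis classes to basis classes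
  have hφcast : ∀ i : Fin l,
      φ ((Pi.single (Fin.castAdd l' i) 1 : Fin (l+l') → ℤ) : (Fin (l+l') → ℤ) ⧸ C₁)
        = ((Pi.single (Fin.castAdd l' i) 1 : Fin (l+l') → ℤ) : (Fin (l+l') → ℤ) ⧸ C₂) := by
    intro i
    have hmem : φ ((Pi.single (Fin.castAdd l' i) 1 : Fin (l+l') → ℤ) : (Fin (l+l') → ℤ) ⧸ C₁)
        ∈ ((Set.range fun i : Fin l =>
            ((Pi.single (Fin.castAdd l' i) 1 : Fin (l + l') → ℤ) : (Fin (l + l') → ℤ) ⧸ C₂)) ∪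
          (Set.range fun i : Fin l =>
            -((Pi.single (Fin.castAdd l' i) 1 : Fin (l + l') → ℤ) : (Fin (l + l') → ℤ) ⧸ C₂)) ∪
          (Set.range fun j : Fin l' =>
            ((Pi.single (Fin.natAdd l j) 1 : Fin (l + l') → ℤ) : (Fin (l + l') → ℤ) ⧸ C₂))) := by
      rw [← hE]
      exact Set.mem_image_of_mem _ (Or.inl (Or.inl ⟨i, rfl⟩))
    have hπi : QuotientAddGroup.map C₂ ρ.ker (AddMonoidHom.id _) hC₂
        (φ ((Pi.single (Fin.castAdd l' i) 1 : Fin (l+l') → ℤ) : (Fin (l+l') → ℤ) ⧸ C₁))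
        = ((Pi.single (Fin.castAdd l' i) 1 : Fin (l+l') → ℤ) : (Fin (l+l') → ℤ) ⧸ ρ.ker) := by
      rw [hπ, hmap]
    rcases hmem with (⟨k, hk⟩ | ⟨k, hk⟩) | ⟨j, hj⟩
    · -- candidate q₂(E_k)
      rw [← hk, hmap] at hπi
      have := hkq _ _ hπi
      rw [hρcast, hρcast] at this
      rw [hd1 i k this] at hk
      exact hk.symm
    · -- candidate -q₂(E_k) : impossible
      exfalso
      rw [← hk, map_neg, hmap] at hπi
      have hπi' : ((-Pi.single (Fin.castAdd l' k) 1 : Fin (l+l') → ℤ) : (Fin (l+l') → ℤ) ⧸ ρ.ker)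
          = ((Pi.single (Fin.castAdd l' i) 1 : Fin (l+l') → ℤ) : (Fin (l+l') → ℤ) ⧸ ρ.ker) := by
        rw [← hπi]; rfl
      have := hkq _ _ hπi'
      rw [map_neg, hρcast, hρcast] at this
      exact hd2 i k this
    · -- candidate q₂(E_{l+j}) : impossible
      exfalso
      rw [← hj, hmap] at hπi
      have := hkq _ _ hπi
      rw [hρnat, hρcast] at this
      exact hd3 i j this
  have hφnat : ∀ j : Fin l',
      φ ((Pi.single (Fin.natAdd l j) 1 : Fin (l+l') → ℤ) : (Fin (l+l') → ℤ) ⧸ C₁)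
        = ((Pi.single (Fin.natAdd l j) 1 : Fin (l+l') → ℤ) : (Fin (l+l') → ℤ) ⧸ C₂) := by
    intro j
    have hmem : φ ((Pi.single (Fin.natAdd l j) 1 : Fin (l+l') → ℤ) : (Fin (l+l') → ℤ) ⧸ C₁)
        ∈ ((Set.range fun i : Fin l =>
            ((Pi.single (Fin.castAdd l' i) 1 : Fin (l + l') → ℤ) : (Fin (l + l') → ℤ) ⧸ C₂)) ∪
          (Set.range fun i : Fin l =>
            -((Pi.single (Fin.castAdd l' i) 1 : Fin (l + l') → ℤ) : (Fin (l + l') → ℤ) ⧸ C₂)) ∪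
          (Set.range fun j : Fin l' =>
            ((Pi.single (Fin.natAdd l j) 1 : Fin (l + l') → ℤ) : (Fin (l + l') → ℤ) ⧸ C₂))) := by
      rw [← hE]
      exact Set.mem_image_of_mem _ (Or.inr ⟨j, rfl⟩)
    have hπj : QuotientAddGroup.map C₂ ρ.ker (AddMonoidHom.id _) hC₂
        (φ ((Pi.single (Fin.natAdd l j) 1 : Fin (l+l') → ℤ) : (Fin (l+l') → ℤ) ⧸ C₁))
        = ((Pi.single (Fin.natAdd l j) 1 : Fin (l+l') → ℤ) : (Fin (l+l') → ℤ) ⧸ ρ.ker) := by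
      rw [hπ, hmap]
    rcases hmem with (⟨k, hk⟩ | ⟨k, hk⟩) | ⟨j', hj'⟩
    · exfalso
      rw [← hk, hmap] at hπj
      have := hkq _ _ hπj
      rw [hρcast, hρnat] at this
      exact hd4 j k this
    · exfalso
      rw [← hk, map_neg, hmap] at hπj
      have hπj' : ((-Pi.single (Fin.castAdd l' k) 1 : Fin (l+l') → ℤ) : (Fin (l+l') → ℤ) ⧸ ρ.ker)
          = ((Pi.single (Fin.natAdd l j) 1 : Fin (l+l') → ℤ) : (Fin (l+l') → ℤ) ⧸ ρ.ker) := by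
        rw [← hπj]; rfl
      have := hkq _ _ hπj'
      rw [map_neg, hρcast, hρnat] at this
      exact hd5 j k this
    · rw [← hj', hmap] at hπj
      have := hkq _ _ hπj
      rw [hρnat, hρnat] at this
      rw [hd6 j j' this] at hj'
      exact hj'.symm
  -- hence φ is induced by the identity
  have hφall : ∀ v : Fin (l+l') → ℤ,
      φ ((v : Fin (l+l') → ℤ) : (Fin (l+l') → ℤ) ⧸ C₁) = ((v : Fin (l+l') → ℤ) : (Fin (l+l') → ℤ) ⧸ C₂) := by
    intro v
    have hv : v = ∑ i, v i • Pi.single i (1:ℤ) := by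
      conv_lhs => rw [← Finset.univ_sum_single v]
      congr 1; ext i
      rw [← Pi.single_smul, smul_eq_mul, mul_one]
    have hmk : ∀ (C : AddSubgroup (Fin (l+l') → ℤ)),
        ((∑ i, v i • Pi.single i (1:ℤ) : Fin (l+l') → ℤ) : (Fin (l+l') → ℤ) ⧸ C)
          = ∑ i, v i • ((Pi.single i 1 : Fin (l+l') → ℤ) : (Fin (l+l') → ℤ) ⧸ C) := by
      intro C
      rw [← QuotientAddGroup.mk'_apply, map_sum]
      simp only [map_zsmul, QuotientAddGroup.mk'_apply]
    rw [hv, hmk C₁, hmk C₂, map_sum]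
    refine Finset.sum_congr rfl fun i _ => ?_
    rw [map_zsmul]
    congr 1
    induction i using Fin.addCases with
    | left i => exact hφcast i
    | right j => exact hφnat j
  ext x
  rw [← QuotientAddGroup.eq_zero_iff (N := C₁) x, ← QuotientAddGroup.eq_zero_iff (N := C₂) x]
  constructor
  · intro h
    rw [← hφall x, h, map_zero]
  · intro h
    exact φ.injective (by rw [hφall x, h, map_zero])
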